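/- Let Λ(γ) = M0 + Σj Mj*γj be an LME closed under multiplication (satisfying the support conditions). Then for any two valuations γ1, γ2 ∈ ℝ^k and any β ∈ [0,1], exp(Λ(β·γ1 + (1−β)·γ2)) = β·exp(Λ(γ1)) + (1−β)·exp(Λ(γ2)). -/

import Mathlib

open Matrix

noncomputable def supp {n : ℕ} (M : Matrix (Fin n) (Fin n) ℝ) : Matrix (Fin n) (Fin n) Bool :=
  fun i j => decide (M i j ≠ 0)

def bmul {n : ℕ} (A B : Matrix (Fin n) (Fin n) Bool) : Matrix (Fin n) (Fin n) Bool :=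
  fun i j => decide (∃ l, A i l = true ∧ B l j = true)

def ble {n : ℕ} (A B : Matrix (Fin n) (Fin n) Bool) : Prop :=
  ∀ i j, B i j = false → A i j = false

theorem exp_of_closed_lme_convex_combination {n k : ℕ}
    (M0 : Matrix (Fin n) (Fin n) ℝ) (M : Fin k → Matrix (Fin n) (Fin n) ℝ)
    (h0 : ble (bmul (supp M0) (supp M0)) (supp M0))
    (h1 : ∀ j, ble (bmul (supp M0) (supp (M j))) (supp (M j)))
    (h2 : ∀ j, ble (bmul (supp (M j)) (supp M0)) (supp (M j)))
    (h3 : ∀ j l, bmul (supp (M j)) (supp (M l)) = fun _ _ => false)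
    (γ₁ γ₂ : Fin k → ℝ) (β : ℝ) (hβ : β ∈ Set.Icc (0:ℝ) 1) :
    NormedSpace.exp (M0 + ∑ j, (β * γ₁ j + (1 - β) * γ₂ j) • M j)
      = β • NormedSpace.exp (M0 + ∑ j, γ₁ j • M j)
        + (1 - β) • NormedSpace.exp (M0 + ∑ j, γ₂ j • M j) := by
  classical
  -- the "support" predicate: A is supported inside the union of supports of the M j
  set Z : Matrix (Fin n) (Fin n) ℝ → Prop :=
    fun A => ∀ i p, A i p ≠ 0 → ∃ j, M j i p ≠ 0 with hZdef
  -- product of two Z matrices vanishes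
  have hzero : ∀ A B, Z A → Z B → A * B = 0 := by
    intro A B hA hB
    ext i p
    rw [Matrix.mul_apply]
    apply Finset.sum_eq_zero
    intro l _
    by_contra h
    obtain ⟨j, hj⟩ := hA i l (left_ne_zero_of_mul h)
    obtain ⟨j', hj'⟩ := hB l p (right_ne_zero_of_mul h)
    have h3' := congrFun (congrFun (h3 j j') i) p
    simp only [bmul, supp, decide_eq_false_iff_not, not_exists, not_and,
      decide_eq_true_eq] at h3'
    exact (h3' l hj) hj'
  -- Z is stable under right multiplication by M0
  have hZr : ∀ A, Z A → Z (A * M0) := by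
    intro A hA i p hne
    rw [Matrix.mul_apply] at hne
    obtain ⟨l, _, hl⟩ := Finset.exists_ne_zero_of_sum_ne_zero hne
    obtain ⟨j, hj⟩ := hA i l (left_ne_zero_of_mul hl)
    have h2' := h2 j i p
    simp only [bmul, supp, decide_eq_false_iff_not, not_exists, not_and,
      decide_eq_true_eq, ne_eq, Decidable.not_not] at h2'
    refine ⟨j, fun hc => ?_⟩
    exact (right_ne_zero_of_mul hl) (h2' hc l hj)
  -- Z is stable under left multiplication by M0
  have hZl : ∀ A, Z A → Z (M0 * A) := by
    intro A hA i p hne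
    rw [Matrix.mul_apply] at hne
    obtain ⟨l, _, hl⟩ := Finset.exists_ne_zero_of_sum_ne_zero hne
    obtain ⟨j, hj⟩ := hA l p (right_ne_zero_of_mul hl)
    have h1' := h1 j i p
    simp only [bmul, supp, decide_eq_false_iff_not, not_exists, not_and,
      decide_eq_true_eq, ne_eq, Decidable.not_not] at h1'
    refine ⟨j, fun hc => ?_⟩
    exact hj (h1' hc l (left_ne_zero_of_mul hl))
  have hZlpow : ∀ a : ℕ, ∀ A, Z A → Z (M0 ^ a * A) := by
    intro a
    induction a with
    | zero => intro A hA; simpa using hA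
    | succ a ih =>
        intro A hA
        have h : M0 ^ (a + 1) * A = M0 ^ a * (M0 * A) := by
          rw [pow_succ, mul_assoc]
        rw [h]
        exact ih _ (hZl A hA)
  have hZrpow : ∀ a : ℕ, ∀ A, Z A → Z (A * M0 ^ a) := by
    intro a
    induction a with
    | zero => intro A hA; simpa using hA
    | succ a ih =>
        intro A hA
        have h : A * M0 ^ (a + 1) = A * M0 ^ a * M0 := by
          rw [pow_succ, mul_assoc]
        rw [h]
        exact hZr _ (ih A hA)
  -- any linear combination of the M j is in Z
  have hZcomb : ∀ c : Fin k → ℝ, Z (∑ j, c j • M j) := by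
    intro c i p hne
    have hne' : (∑ j, c j * M j i p) ≠ 0 := by
      simpa [Matrix.sum_apply] using hne
    obtain ⟨j, _, hj⟩ := Finset.exists_ne_zero_of_sum_ne_zero hne'
    exact ⟨j, right_ne_zero_of_mul hj⟩
  -- powers of M0 + N for N in Z
  have hpow : ∀ N, Z N → ∀ m : ℕ,
      (M0 + N) ^ m = M0 ^ m + ∑ i ∈ Finset.range m, M0 ^ i * N * M0 ^ (m - 1 - i) := by
    intro N hN m
    induction m with
    | zero => simp
    | succ m ih =>
        have hCN : (∑ i ∈ Finset.range m, M0 ^ i * N * M0 ^ (m - 1 - i)) * N = 0 := by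
          rw [Finset.sum_mul]
          apply Finset.sum_eq_zero
          intro i _
          have h : M0 ^ i * N * M0 ^ (m - 1 - i) * N
              = M0 ^ i * ((N * M0 ^ (m - 1 - i)) * N) := by
            simp only [mul_assoc]
          rw [h, hzero _ _ (hZrpow _ _ hN) hN, mul_zero]
        have hCM0 : (∑ i ∈ Finset.range m, M0 ^ i * N * M0 ^ (m - 1 - i)) * M0
            = ∑ i ∈ Finset.range m, M0 ^ i * N * M0 ^ (m - i) := by
          rw [Finset.sum_mul]
          refine Finset.sum_congr rfl fun i hi => ?_
          have h : m - 1 - i + 1 = m - i := by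
            have := Finset.mem_range.mp hi; omega
          rw [mul_assoc, ← pow_succ, h]
        rw [pow_succ, ih, add_mul, mul_add, mul_add, hCN, hCM0, ← pow_succ,
          Finset.sum_range_succ]
        simp only [Nat.add_sub_cancel, Nat.sub_self, pow_zero, mul_one]
        abel
  have hsum : (∑ j, (β * γ₁ j + (1 - β) * γ₂ j) • M j)
      = β • (∑ j, γ₁ j • M j) + (1 - β) • (∑ j, γ₂ j • M j) := by
    rw [Finset.smul_sum, Finset.smul_sum, ← Finset.sum_add_distrib]
    refine Finset.sum_congr rfl fun j _ => ?_
    rw [smul_smul, smul_smul, ← add_smul]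
  have hkey : ∀ m : ℕ, (M0 + ∑ j, (β * γ₁ j + (1 - β) * γ₂ j) • M j) ^ m
      = β • (M0 + ∑ j, γ₁ j • M j) ^ m + (1 - β) • (M0 + ∑ j, γ₂ j • M j) ^ m := by
    intro m
    rw [hpow _ (hZcomb _) m, hpow _ (hZcomb _) m, hpow _ (hZcomb _) m, hsum]
    simp only [mul_add, add_mul, mul_smul_comm, smul_mul_assoc, smul_add,
      Finset.sum_add_distrib, ← Finset.smul_sum, mul_assoc]
    module
  -- now pass to the exponential series
  letI : SeminormedRing (Matrix (Fin n) (Fin n) ℝ) := Matrix.linftyOpSemiNormedRing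
  letI : NormedRing (Matrix (Fin n) (Fin n) ℝ) := Matrix.linftyOpNormedRing
  letI : NormedAlgebra ℝ (Matrix (Fin n) (Fin n) ℝ) := Matrix.linftyOpNormedAlgebra
  have hs1 : Summable fun m : ℕ => (m.factorial⁻¹ : ℝ) • (M0 + ∑ j, γ₁ j • M j) ^ m :=
    NormedSpace.expSeries_summable' (𝕂 := ℝ) _
  have hs2 : Summable fun m : ℕ => (m.factorial⁻¹ : ℝ) • (M0 + ∑ j, γ₂ j • M j) ^ m :=
    NormedSpace.expSeries_summable' (𝕂 := ℝ) _
  have hpt : ∀ m : ℕ,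
      (m.factorial⁻¹ : ℝ) • (M0 + ∑ j, (β * γ₁ j + (1 - β) * γ₂ j) • M j) ^ m
      = β • ((m.factorial⁻¹ : ℝ) • (M0 + ∑ j, γ₁ j • M j) ^ m)
        + (1 - β) • ((m.factorial⁻¹ : ℝ) • (M0 + ∑ j, γ₂ j • M j) ^ m) := by
    intro m
    rw [hkey m]
    module
  rw [NormedSpace.exp_eq_tsum (𝕂 := ℝ)]
  beta_reduce
  calc ∑' m : ℕ, (m.factorial⁻¹ : ℝ) • (M0 + ∑ j, (β * γ₁ j + (1 - β) * γ₂ j) • M j) ^ m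
      = ∑' m : ℕ, (β • ((m.factorial⁻¹ : ℝ) • (M0 + ∑ j, γ₁ j • M j) ^ m)
          + (1 - β) • ((m.factorial⁻¹ : ℝ) • (M0 + ∑ j, γ₂ j • M j) ^ m)) :=
        tsum_congr hpt
    _ = (∑' m : ℕ, β • ((m.factorial⁻¹ : ℝ) • (M0 + ∑ j, γ₁ j • M j) ^ m))
          + ∑' m : ℕ, (1 - β) • ((m.factorial⁻¹ : ℝ) • (M0 + ∑ j, γ₂ j • M j) ^ m) :=
        Summable.tsum_add (hs1.const_smul β) (hs2.const_smul (1 - β))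
    _ = β • (∑' m : ℕ, (m.factorial⁻¹ : ℝ) • (M0 + ∑ j, γ₁ j • M j) ^ m)
          + (1 - β) • ∑' m : ℕ, (m.factorial⁻¹ : ℝ) • (M0 + ∑ j, γ₂ j • M j) ^ m := by
        rw [Summable.tsum_const_smul _ hs1, Summable.tsum_const_smul _ hs2]
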